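/- Let k be a positive integer with gcd(k, 6) = 1 and let n ≥ 1. Let ν_n(k) be the number of primitive 0–1 vectors v of length n such that x(v) has denominator k in lowest terms, and let α_n(k) be the number of T-cycles of exact length n contained in D_k (orbits {x, T(x), …, T^{n−1}(x)} with x ∈ D_k, T^n(x) = x, and T^m(x) ≠ x for 1 ≤ m < n). Then ν_n(k) = n · α_n(k) (Proposition 3.1, claim 3). -/

import Mathlib

/-- The `3x+1` function on rationals: `T x = x/2` if the numerator of `x` is even,
and `T x = (3x+1)/2` if the numerator of `x` is odd. -/
noncomputable def T (x : ℚ) : ℚ := if Even x.num then x / 2 else (3 * x + 1) / 2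

/-- `ρ(v) = ∑_{j=0}^{n-1} v_j ⬝ 3^{v_{j+1} + ⋯ + v_{n-1}} ⬝ 2^j`, for a `0-1` vector
encoded as a list. -/
def rhoL : List ℕ → ℕ
  | [] => 0
  | a :: t => a * 3 ^ t.sum + 2 * rhoL t

/-- `x(v) = ρ(v) / (2^n - 3^{ω(v)})`, where `n` is the length of `v` and
`ω(v)` is the sum of its entries. -/
noncomputable def xL (l : List ℕ) : ℚ :=
  (rhoL l : ℚ) / ((2 : ℚ) ^ l.length - (3 : ℚ) ^ l.sum)

/-- A vector is primitive if its cyclic rotations are pairwise distinct, i.e. no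
nontrivial rotation fixes it. -/
def Primitive (l : List ℕ) : Prop := ∀ m, 1 ≤ m → m < l.length → l.rotate m ≠ l

def DL (l : List ℕ) : ℤ := 2 ^ l.length - 3 ^ l.sum

lemma xL_eq_div (l : List ℕ) : xL l = ((rhoL l : ℤ) : ℚ) / ((DL l : ℤ) : ℚ) := by
  unfold xL DL; push_cast; ring_nf

lemma odd_DL {l : List ℕ} (hl : l ≠ []) : Odd (DL l) := by
  have h1 : Even ((2:ℤ) ^ l.length) := by
    rcases List.exists_cons_of_ne_nil hl with ⟨a, t, rfl⟩
    simp [pow_succ]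
  have h2 : Odd ((3:ℤ) ^ l.sum) := Odd.pow (by decide)
  exact h1.sub_odd h2

lemma DL_ne_zero {l : List ℕ} (hl : l ≠ []) : DL l ≠ 0 := by
  intro h
  have := odd_DL hl
  rw [h] at this
  simp [Int.odd_iff] at this

lemma even_num_xL {l : List ℕ} (hl : l ≠ []) : Even (xL l).num ↔ Even (rhoL l) := by
  have hD := DL_ne_zero hl
  have hDQ : ((DL l : ℤ) : ℚ) ≠ 0 := Int.cast_ne_zero.2 hD
  have hden : ((xL l).den : ℚ) ≠ 0 := by exact_mod_cast (xL l).den_nz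
  have key : (xL l).num * DL l = (rhoL l : ℤ) * ((xL l).den : ℤ) := by
    have h1 : ((xL l).num : ℚ) / ((xL l).den : ℚ) = ((rhoL l : ℤ) : ℚ) / ((DL l : ℤ) : ℚ) := by
      rw [Rat.num_div_den, xL_eq_div]
    field_simp at h1
    rw [mul_comm ((rhoL l : ℤ))]
    exact_mod_cast h1
  have hdvd : ((xL l).den : ℤ) ∣ DL l := by
    have : xL l = Rat.divInt (rhoL l : ℤ) (DL l) := by rw [Rat.divInt_eq_div, xL_eq_div]
    rw [this]
    exact Rat.den_dvd _ _
  have hDodd : ¬ Even (DL l) := by simpa [Int.not_even_iff_odd] using odd_DL hl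
  have hdenodd : ¬ Even ((xL l).den : ℤ) := by
    rcases hdvd with ⟨t, ht⟩
    intro he
    exact hDodd (by rw [ht]; exact he.mul_right t)
  constructor
  · intro h
    have : Even ((rhoL l : ℤ) * ((xL l).den : ℤ)) := by rw [← key]; exact h.mul_right _
    rcases (Int.even_mul.1 this) with h'|h'
    · exact_mod_cast h'
    · exact absurd h' hdenodd
  · intro h
    have : Even ((xL l).num * DL l) := by
      rw [key]; exact (Int.even_coe_nat _ |>.2 h).mul_right _
    rcases (Int.even_mul.1 this) with h'|h'
    · exact h'
    · exact absurd h' hDodd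

lemma head_parity (a : ℕ) (t : List ℕ) : Even (xL (a :: t)).num ↔ Even a := by
  rw [even_num_xL (List.cons_ne_nil a t)]
  show Even (a * 3 ^ t.sum + 2 * rhoL t) ↔ Even a
  have h3 : ¬ Even (3 ^ t.sum) := by simp [Nat.even_pow]; intro h; exact absurd h (by decide)
  simp [Nat.even_add, Nat.even_mul, h3]

lemma rho_append0 (t : List ℕ) : rhoL (t ++ [0]) = rhoL t := by
  induction t with
  | nil => simp [rhoL]
  | cons b s ih => simp [rhoL, ih]

lemma rho_append1 (t : List ℕ) : rhoL (t ++ [1]) = 3 * rhoL t + 2 ^ t.length := by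
  induction t with
  | nil => simp [rhoL]
  | cons b s ih =>
    simp [rhoL, ih, pow_succ]
    ring

lemma T_xL (a : ℕ) (t : List ℕ) (ha : a = 0 ∨ a = 1) :
    T (xL (a :: t)) = xL (t ++ [a]) := by
  have hD : ((DL (a :: t) : ℤ) : ℚ) ≠ 0 :=
    Int.cast_ne_zero.2 (DL_ne_zero (List.cons_ne_nil a t))
  rcases ha with rfl | rfl
  · have hev : Even (xL (0 :: t)).num := (head_parity 0 t).2 (by decide)
    rw [T, if_pos hev]
    have hD' : DL (t ++ [0]) = DL (0 :: t) := by simp [DL]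
    rw [xL_eq_div, xL_eq_div, hD', rho_append0]
    have h1 : (rhoL (0 :: t) : ℤ) = 2 * rhoL t := by
      show ((0 * 3 ^ t.sum + 2 * rhoL t : ℕ) : ℤ) = _
      push_cast; ring
    rw [h1]
    push_cast
    field_simp
  · have hev : ¬ Even (xL (1 :: t)).num := by
      rw [head_parity 1 t]; decide
    rw [T, if_neg hev]
    have hD' : DL (t ++ [1]) = DL (1 :: t) := by simp [DL, Nat.add_comm]
    rw [xL_eq_div, xL_eq_div, hD', rho_append1]
    have h1 : (rhoL (1 :: t) : ℤ) = 3 ^ t.sum + 2 * rhoL t := by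
      show ((1 * 3 ^ t.sum + 2 * rhoL t : ℕ) : ℤ) = _
      push_cast; ring
    rw [h1]
    have hDval : (DL (1 :: t) : ℤ) = 2 * 2 ^ t.length - 3 * 3 ^ t.sum := by
      show (2 : ℤ) ^ (t.length + 1) - 3 ^ (1 + t.sum) = _
      ring
    rw [hDval] at hD ⊢
    push_cast at hD ⊢
    field_simp
    ring

lemma T_xL' {l : List ℕ} (hl : l ≠ []) (h01 : ∀ b ∈ l, b = 0 ∨ b = 1) :
    T (xL l) = xL (l.rotate 1) := by
  rcases List.exists_cons_of_ne_nil hl with ⟨a, t, rfl⟩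
  rw [List.rotate_cons_succ, List.rotate_zero]
  exact T_xL a t (h01 a List.mem_cons_self)

lemma iterT_xL {l : List ℕ} (hl : l ≠ []) (h01 : ∀ b ∈ l, b = 0 ∨ b = 1) (m : ℕ) :
    T^[m] (xL l) = xL (l.rotate m) := by
  induction m with
  | zero => simp
  | succ m ih =>
    rw [Function.iterate_succ_apply', ih]
    have h1 : l.rotate m ≠ [] := by
      intro h
      exact hl (List.eq_nil_of_length_eq_zero (by
        have := List.length_rotate l m
        rw [h] at this
        simpa using this.symm))
    have h2 : ∀ b ∈ l.rotate m, b = 0 ∨ b = 1 := fun b hb => h01 b ((List.mem_rotate).1 hb)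
    rw [T_xL' h1 h2, List.rotate_rotate]

noncomputable def pvec : ℕ → ℚ → List ℕ
  | 0, _ => []
  | n + 1, x => (if Even x.num then 0 else 1) :: pvec n (T x)

@[simp] lemma pvec_length (x : ℚ) (n : ℕ) : (pvec n x).length = n := by
  induction n generalizing x with
  | zero => rfl
  | succ n ih => simp [pvec, ih]

lemma pvec_01 (x : ℚ) (n : ℕ) : ∀ a ∈ pvec n x, a = 0 ∨ a = 1 := by
  induction n generalizing x with
  | zero => simp [pvec]
  | succ n ih =>
    intro a ha
    rcases List.mem_cons.1 ha with h | h
    · subst h; split <;> simp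
    · exact ih (T x) a h

lemma two_T (x : ℚ) :
    2 * T x = 3 ^ (if Even x.num then 0 else 1) * x + (if Even x.num then (0:ℚ) else 1) := by
  rw [T]; split <;> ring

lemma iter_formula (n : ℕ) (x : ℚ) :
    (2 : ℚ) ^ n * T^[n] x = 3 ^ (pvec n x).sum * x + rhoL (pvec n x) := by
  induction n generalizing x with
  | zero => simp [pvec, rhoL]
  | succ n ih =>
    have key := ih (T x)
    set a : ℕ := if Even x.num then 0 else 1 with ha
    have hpv : pvec (n+1) x = a :: pvec n (T x) := by
      rw [pvec]
    have h2T : 2 * T x = 3 ^ a * x + (a : ℚ) := by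
      rw [two_T]
      rcases Nat.decEq a 0 with _ | _ <;> split_ifs with h <;> simp [ha, h]
    rw [hpv]
    have hsum : (a :: pvec n (T x)).sum = a + (pvec n (T x)).sum := by simp
    have hrho : (rhoL (a :: pvec n (T x)) : ℚ)
        = a * 3 ^ (pvec n (T x)).sum + 2 * rhoL (pvec n (T x)) := by
      show ((a * 3 ^ (pvec n (T x)).sum + 2 * rhoL (pvec n (T x)) : ℕ) : ℚ) = _
      push_cast; ring
    rw [hsum, hrho, Function.iterate_succ_apply]
    calc (2:ℚ) ^ (n+1) * T^[n] (T x) = 2 ^ n * (2 ^ n)⁻¹ * 0 + 2 * (2 ^ n * T^[n] (T x)) := by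
          ring
    _ = 2 * (3 ^ (pvec n (T x)).sum * T x + rhoL (pvec n (T x))) := by rw [key]; ring
    _ = 3 ^ (pvec n (T x)).sum * (2 * T x) + 2 * rhoL (pvec n (T x)) := by ring
    _ = 3 ^ (pvec n (T x)).sum * (3 ^ a * x + (a:ℚ)) + 2 * rhoL (pvec n (T x)) := by rw [h2T]
    _ = 3 ^ (a + (pvec n (T x)).sum) * x + ((a:ℚ) * 3 ^ (pvec n (T x)).sum + 2 * rhoL (pvec n (T x))) := by
          rw [pow_add]; ring

lemma pvec_take (m : ℕ) : ∀ (l : List ℕ), (∀ b ∈ l, b = 0 ∨ b = 1) → m ≤ l.length →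
    pvec m (xL l) = l.take m := by
  induction m with
  | zero => intro l _ _; simp [pvec]
  | succ m ih =>
    intro l h01 hm
    have hl : l ≠ [] := by
      intro h; rw [h] at hm; simp at hm
    rcases List.exists_cons_of_ne_nil hl with ⟨a, t, rfl⟩
    have ha := h01 a List.mem_cons_self
    have hhead : (if Even (xL (a :: t)).num then 0 else 1) = a := by
      rcases ha with rfl | rfl
      · rw [if_pos ((head_parity 0 t).2 (by decide))]
      · rw [if_neg (by rw [head_parity 1 t]; decide)]
    have hT : T (xL (a :: t)) = xL (t ++ [a]) := T_xL a t ha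
    have h01' : ∀ b ∈ t ++ [a], b = 0 ∨ b = 1 := by
      intro b hb
      rcases List.mem_append.1 hb with h | h
      · exact h01 b (List.mem_cons_of_mem a h)
      · rcases List.mem_singleton.1 h with rfl; exact ha
    have hm' : m ≤ (t ++ [a]).length := by
      simp only [List.length_append, List.length_singleton, List.length_cons] at hm ⊢
      omega
    have hmt : m ≤ t.length := by
      simp only [List.length_cons] at hm; omega
    show (if Even (xL (a :: t)).num then 0 else 1) :: pvec m (T (xL (a :: t)))
        = (a :: t).take (m + 1)
    rw [hhead, hT, ih (t ++ [a]) h01' hm', List.take_succ_cons,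
      List.take_append_of_le_length hmt]

lemma pvec_inv {n : ℕ} (hn : 1 ≤ n) {x : ℚ} (hx : T^[n] x = x) : xL (pvec n x) = x := by
  have h := iter_formula n x
  rw [hx] at h
  set l := pvec n x with hl
  have hlen : l.length = n := pvec_length x n
  have hne : l ≠ [] := by
    intro h'; rw [h'] at hlen; simp at hlen; omega
  have hD : ((DL l : ℤ) : ℚ) ≠ 0 := Int.cast_ne_zero.2 (DL_ne_zero hne)
  rw [xL_eq_div]
  rw [div_eq_iff hD]
  have : ((DL l : ℤ) : ℚ) = 2 ^ l.length - 3 ^ l.sum := by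
    unfold DL; push_cast; ring
  rw [this, hlen]
  push_cast
  linarith [h]

lemma xL_inj {l l' : List ℕ} (h01 : ∀ b ∈ l, b = 0 ∨ b = 1) (h01' : ∀ b ∈ l', b = 0 ∨ b = 1)
    (hlen : l.length = l'.length) (h : xL l = xL l') : l = l' := by
  have h1 : pvec l.length (xL l) = l := by
    rw [pvec_take l.length l h01 le_rfl, List.take_length]
  have h2 : pvec l.length (xL l') = l' := by
    rw [hlen, pvec_take l'.length l' h01' le_rfl, List.take_length]
  rw [← h1, ← h2, h]

lemma den_T {x : ℚ} (h2 : ¬ 2 ∣ x.den) (h3 : ¬ 3 ∣ x.den) : (T x).den = x.den := by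
  have hd0 : (0 : ℤ) < (x.den : ℤ) := by exact_mod_cast x.pos
  have hxd : ((x.den : ℤ)).natAbs = x.den := Int.natAbs_natCast _
  have hred : Nat.Coprime x.num.natAbs x.den := x.reduced
  have hdq : ((x.den : ℚ)) ≠ 0 := by positivity
  have hmul : x * ((x.den : ℚ)) = (x.num : ℚ) := Rat.mul_den_eq_num x
  by_cases he : Even x.num
  · obtain ⟨c, hc⟩ := id he
    have hx2 : x / 2 = (c : ℚ) / (((x.den : ℤ) : ℤ) : ℚ) := by
      rw [div_eq_div_iff two_ne_zero (by push_cast; exact hdq)]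
      push_cast
      have : ((x.num : ℚ)) = c + c := by exact_mod_cast congrArg (Int.cast : ℤ → ℚ) hc
      linarith [hmul, this]
    have hcop : Nat.Coprime c.natAbs ((x.den : ℤ)).natAbs := by
      rw [hxd]
      exact Nat.Coprime.coprime_dvd_left
        (Int.natAbs_dvd_natAbs.2 ⟨2, by omega⟩ : c.natAbs ∣ x.num.natAbs) hred
    rw [T, if_pos he, hx2]
    have := Rat.den_div_eq_of_coprime hd0 hcop
    omega
  · have hxodd : Odd x.num := Int.not_even_iff_odd.1 he
    have hdodd : Odd ((x.den : ℤ)) := by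
      rw [Int.odd_iff]
      omega
    have heven : (2 : ℤ) ∣ 3 * x.num + x.den := by
      rcases hxodd with ⟨a, ha⟩
      rcases hdodd with ⟨b, hb⟩
      exact ⟨3 * a + b + 2, by rw [ha, hb]; ring⟩
    rcases heven with ⟨c, hc⟩
    have hx2 : (3 * x + 1) / 2 = (c : ℚ) / (((x.den : ℤ) : ℤ) : ℚ) := by
      rw [div_eq_div_iff two_ne_zero (by push_cast; exact hdq)]
      have : ((3 * x.num + x.den : ℤ) : ℚ) = ((2 * c : ℤ) : ℚ) :=
        congrArg (Int.cast : ℤ → ℚ) hc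
      push_cast at this ⊢
      linarith [hmul, this]
    have hcopnd : IsCoprime x.num (x.den : ℤ) := by
      rw [Int.isCoprime_iff_gcd_eq_one]
      exact hred
    have hcop3 : IsCoprime (3 : ℤ) (x.den : ℤ) := by
      rw [Int.isCoprime_iff_gcd_eq_one]
      show Nat.gcd (3:ℤ).natAbs ((x.den:ℤ)).natAbs = 1
      rw [hxd]
      rcases Nat.Prime.eq_one_or_self_of_dvd Nat.prime_three _
        (Nat.gcd_dvd_left 3 x.den) with h | h
      · exact h
      · exact absurd (h ▸ Nat.gcd_dvd_right 3 x.den) h3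
    have hcop' : IsCoprime (3 * x.num + (x.den:ℤ)) (x.den : ℤ) := by
      have := (hcop3.mul_left hcopnd).add_mul_left_left 1
      simpa using this
    have hcopc : IsCoprime c ((x.den:ℤ)) := by
      rw [hc] at hcop'
      exact hcop'.of_mul_left_right
    have hcop : Nat.Coprime c.natAbs ((x.den : ℤ)).natAbs :=
      Int.isCoprime_iff_gcd_eq_one.mp hcopc
    rw [T, if_neg he, hx2]
    have := Rat.den_div_eq_of_coprime hd0 hcop
    omega

lemma iter_comm (x : ℚ) (i j : ℕ) : T^[i] (T^[j] x) = T^[j] (T^[i] x) := by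
  rw [← Function.iterate_add_apply, ← Function.iterate_add_apply, Nat.add_comm]

lemma iter_mul {n : ℕ} {x : ℚ} (hx : T^[n] x = x) (q : ℕ) : T^[n * q] x = x := by
  induction q with
  | zero => simp
  | succ q ih =>
    rw [Nat.mul_succ, Function.iterate_add_apply, hx, ih]

lemma iter_mod {n : ℕ} {x : ℚ} (hx : T^[n] x = x) (j : ℕ) : T^[j] x = T^[j % n] x := by
  conv_lhs => rw [← Nat.div_add_mod j n]
  rw [Nat.add_comm, Function.iterate_add_apply, iter_mul hx]

lemma ncard_biUnion_const {α : Type*} (s : Finset (Set α)) (n : ℕ)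
    (hfin : ∀ c ∈ s, (c : Set α).Finite) (hcard : ∀ c ∈ s, (c : Set α).ncard = n)
    (hd : ∀ c ∈ s, ∀ d ∈ s, c ≠ d → Disjoint c d) :
    (⋃ c ∈ s, c).ncard = s.card * n := by
  classical
  induction s using Finset.induction with
  | empty => simp
  | @insert a s ha ih =>
    rw [Finset.set_biUnion_insert]
    have hafin : a.Finite := hfin a (Finset.mem_insert_self a s)
    have hsfin : (⋃ c ∈ s, c).Finite :=
      Set.Finite.biUnion s.finite_toSet (fun c hc => hfin c (Finset.mem_insert_of_mem hc))
    have hdisj : Disjoint a (⋃ c ∈ s, c) := by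
      simp only [Set.disjoint_iUnion_right]
      intro c hc
      exact hd a (Finset.mem_insert_self a s) c (Finset.mem_insert_of_mem hc)
        (fun h => ha (h ▸ hc))
    rw [Set.ncard_union_eq hdisj hafin hsfin,
      ih (fun c hc => hfin c (Finset.mem_insert_of_mem hc))
        (fun c hc => hcard c (Finset.mem_insert_of_mem hc))
        (fun c hc d hdm hne => hd c (Finset.mem_insert_of_mem hc) d
          (Finset.mem_insert_of_mem hdm) hne),
      hcard a (Finset.mem_insert_self a s), Finset.card_insert_of_notMem ha]
    ring

def Pset (k n : ℕ) : Set ℚ :=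
  {x : ℚ | x.den = k ∧ T^[n] x = x ∧ ∀ m, 1 ≤ m → m < n → T^[m] x ≠ x}

def Orb (x : ℚ) : Set ℚ := {y | ∃ j : ℕ, T^[j] x = y}

lemma den_iter {k : ℕ} (h2 : ¬ 2 ∣ k) (h3 : ¬ 3 ∣ k) {x : ℚ} (hden : x.den = k) (i : ℕ) :
    (T^[i] x).den = k := by
  induction i with
  | zero => simpa using hden
  | succ i ih =>
    rw [Function.iterate_succ_apply', den_T (by rwa [ih]) (by rwa [ih])]
    exact ih

lemma mem_P_orbit {k n : ℕ} (h2 : ¬ 2 ∣ k) (h3 : ¬ 3 ∣ k) (hn : 1 ≤ n) {x y : ℚ}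
    (hx : x ∈ Pset k n) (hy : y ∈ Orb x) : y ∈ Pset k n ∧ Orb y = Orb x := by
  obtain ⟨hden, hTn, hex⟩ := hx
  obtain ⟨j, rfl⟩ := hy
  have hj' : T^[j] x = T^[j % n] x := iter_mod hTn j
  set j' := j % n with hj'def
  have hjlt : j' < n := Nat.mod_lt _ (by omega)
  have hxy : T^[n - j'] (T^[j'] x) = x := by
    rw [← Function.iterate_add_apply, Nat.sub_add_cancel hjlt.le, hTn]
  have hP : T^[j] x ∈ Pset k n := by
    refine ⟨den_iter h2 h3 hden j, ?_, ?_⟩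
    · rw [hj', iter_comm, hTn]
    · intro m h1 hm heq
      apply hex m h1 hm
      have : T^[m] x = T^[m] (T^[n - j'] (T^[j'] x)) := by rw [hxy]
      rw [this, iter_comm, ← hj', heq, hj', hxy]
  refine ⟨hP, ?_⟩
  ext z
  constructor
  · rintro ⟨i, rfl⟩
    exact ⟨i + j, Function.iterate_add_apply T i j x⟩
  · rintro ⟨i, rfl⟩
    refine ⟨i + (n - j'), ?_⟩
    rw [Function.iterate_add_apply, hj', hxy]

lemma orbit_eq_image {n : ℕ} (hn : 1 ≤ n) {x : ℚ} (hTn : T^[n] x = x) :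
    Orb x = (fun j => T^[j] x) '' (Set.Iio n) := by
  ext z
  constructor
  · rintro ⟨j, rfl⟩
    exact ⟨j % n, Nat.mod_lt _ (by omega), (iter_mod hTn j).symm⟩
  · rintro ⟨j, _, rfl⟩
    exact ⟨j, rfl⟩

lemma orbit_injOn {n : ℕ} {x : ℚ} (hTn : T^[n] x = x)
    (hex : ∀ m, 1 ≤ m → m < n → T^[m] x ≠ x) :
    Set.InjOn (fun j => T^[j] x) (Set.Iio n) := by
  have key : ∀ i j : ℕ, i < j → j < n → T^[i] x = T^[j] x → False := by
    intro i j hij hjn heq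
    apply hex (n - j + i) (by omega) (by omega)
    rw [Function.iterate_add_apply, heq, ← Function.iterate_add_apply,
      Nat.sub_add_cancel hjn.le, hTn]
  intro i hi j hj heq
  simp only [Set.mem_Iio] at hi hj
  rcases Nat.lt_trichotomy i j with h | h | h
  · exact absurd (key i j h hj heq) (fun h => h)
  · exact h
  · exact absurd (key j i h hi heq.symm) (fun h => h)

lemma orbit_ncard {n : ℕ} (hn : 1 ≤ n) {x : ℚ} (hTn : T^[n] x = x)
    (hex : ∀ m, 1 ≤ m → m < n → T^[m] x ≠ x) :
    (Orb x).ncard = n ∧ (Orb x).Finite := by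
  rw [orbit_eq_image hn hTn]
  constructor
  · rw [Set.ncard_image_of_injOn (orbit_injOn hTn hex), ← Finset.coe_range,
      Set.ncard_coe_finset, Finset.card_range]
  · exact (Set.finite_Iio n).image _

/-- Proposition 3.1, claim 3: the number `ν_n(k)` of primitive `0-1` vectors of
length `n` with `x(v)` of denominator `k` equals `n` times the number `α_n(k)`
of `T`-cycles of exact length `n` contained in `D_k`. -/
theorem stmt_10 (k : ℕ) (hk : 0 < k) (h6 : Nat.gcd k 6 = 1) (n : ℕ) (hn : 1 ≤ n) :
    {l : List ℕ | l.length = n ∧ (∀ a ∈ l, a = 0 ∨ a = 1) ∧ Primitive l ∧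
        (xL l).den = k}.ncard =
    n * {c : Set ℚ | ∃ x : ℚ, x.den = k ∧ T^[n] x = x ∧
        (∀ m, 1 ≤ m → m < n → T^[m] x ≠ x) ∧
        c = {y | ∃ j : ℕ, T^[j] x = y}}.ncard := by
  classical
  have h2 : ¬ 2 ∣ k := by
    intro h
    have := Nat.dvd_gcd h (by norm_num : (2:ℕ) ∣ 6)
    omega
  have h3 : ¬ 3 ∣ k := by
    intro h
    have := Nat.dvd_gcd h (by norm_num : (3:ℕ) ∣ 6)
    omega
  set V : Set (List ℕ) := {l : List ℕ | l.length = n ∧ (∀ a ∈ l, a = 0 ∨ a = 1) ∧ Primitive l ∧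
      (xL l).den = k} with hV
  set C : Set (Set ℚ) := {c : Set ℚ | ∃ x : ℚ, x.den = k ∧ T^[n] x = x ∧
      (∀ m, 1 ≤ m → m < n → T^[m] x ≠ x) ∧ c = {y | ∃ j : ℕ, T^[j] x = y}} with hC
  have hCalt : C = Orb '' (Pset k n) := by
    ext c
    constructor
    · rintro ⟨x, h1, h2', h3', h4⟩
      exact ⟨x, ⟨h1, h2', h3'⟩, h4.symm⟩
    · rintro ⟨x, ⟨h1, h2', h3'⟩, rfl⟩
      exact ⟨x, h1, h2', h3', rfl⟩
  -- nonempty lists in V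
  have hVne : ∀ l ∈ V, l ≠ [] := by
    rintro l ⟨hlen, -, -, -⟩ h
    rw [h] at hlen
    simp at hlen
    omega
  -- xL image of V is Pset
  have hVP : xL '' V = Pset k n := by
    ext x
    constructor
    · rintro ⟨l, hl, rfl⟩
      obtain ⟨hlen, h01, hprim, hden⟩ := hl
      have hne : l ≠ [] := hVne l ⟨hlen, h01, hprim, hden⟩
      refine ⟨hden, ?_, ?_⟩
      · rw [iterT_xL hne h01 n, ← hlen, List.rotate_length]
      · intro m h1 hm heq
        rw [iterT_xL hne h01 m] at heq
        have := xL_inj (fun b hb => h01 b ((List.mem_rotate).1 hb)) h01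
          (by rw [List.length_rotate]) heq
        exact hprim m h1 (by omega) this
    · rintro ⟨hden, hTn, hex⟩
      refine ⟨pvec n x, ⟨pvec_length x n, pvec_01 x n, ?_, ?_⟩, pvec_inv hn hTn⟩
      · intro m h1 hm heq
        have hxl : xL (pvec n x) = x := pvec_inv hn hTn
        have hlen : (pvec n x).length = n := pvec_length x n
        have hne : pvec n x ≠ [] := by
          intro h; rw [h] at hlen; simp at hlen; omega
        apply hex m h1 (by rwa [hlen] at hm)
        rw [← hxl, iterT_xL hne (pvec_01 x n) m, heq]
      · rw [pvec_inv hn hTn]; exact hden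
  -- injectivity of xL on V
  have hinj : Set.InjOn xL V := by
    rintro l ⟨hlen, h01, -, -⟩ l' ⟨hlen', h01', -, -⟩ h
    exact xL_inj h01 h01' (by rw [hlen, hlen']) h
  -- finiteness of V
  have hVfin : V.Finite := by
    have hsub : V ⊆ (List.map (Fin.val : Fin 2 → ℕ)) ''
        {l : List (Fin 2) | l.length = n} := by
      rintro l ⟨hlen, h01, -, -⟩
      refine ⟨l.map (fun a => Fin.ofNat 2 a), by simpa using hlen, ?_⟩
      rw [List.map_map]
      have : l.map ((Fin.val : Fin 2 → ℕ) ∘ (fun a => Fin.ofNat 2 a)) = l.map id := by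
        apply List.map_congr_left
        intro a ha
        rcases h01 a ha with rfl | rfl <;> rfl
      rw [this, List.map_id]
    exact Set.Finite.subset ((List.finite_length_eq (Fin 2) n).image _) hsub
  have hPfin : (Pset k n).Finite := hVP ▸ hVfin.image xL
  have hCfin : C.Finite := hCalt ▸ hPfin.image Orb
  -- counting
  have hcount : V.ncard = (Pset k n).ncard := by
    rw [← hVP, Set.ncard_image_of_injOn hinj]
  have hPU : Pset k n = ⋃ c ∈ hCfin.toFinset, c := by
    ext y
    simp only [Set.mem_iUnion, Set.Finite.mem_toFinset]
    constructor
    · intro hy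
      exact ⟨Orb y, hCalt ▸ ⟨y, hy, rfl⟩, ⟨0, rfl⟩⟩
    · rintro ⟨c, hc, hyc⟩
      rw [hCalt] at hc
      obtain ⟨x, hx, rfl⟩ := hc
      exact (mem_P_orbit h2 h3 hn hx hyc).1
  have horb : ∀ c ∈ hCfin.toFinset, ∃ x ∈ Pset k n, c = Orb x := by
    intro c hc
    rw [Set.Finite.mem_toFinset, hCalt] at hc
    obtain ⟨x, hx, rfl⟩ := hc
    exact ⟨x, hx, rfl⟩
  have hmain : (Pset k n).ncard = hCfin.toFinset.card * n := by
    rw [hPU]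
    apply ncard_biUnion_const
    · intro c hc
      obtain ⟨x, hx, rfl⟩ := horb c hc
      exact (orbit_ncard hn hx.2.1 hx.2.2).2
    · intro c hc
      obtain ⟨x, hx, rfl⟩ := horb c hc
      exact (orbit_ncard hn hx.2.1 hx.2.2).1
    · intro c hc d hd hne
      obtain ⟨x, hx, rfl⟩ := horb c hc
      obtain ⟨x', hx', rfl⟩ := horb d hd
      by_contra hdisj
      obtain ⟨z, hz1, hz2⟩ := Set.not_disjoint_iff.1 hdisj
      exact hne (((mem_P_orbit h2 h3 hn hx hz1).2.symm).trans
        (mem_P_orbit h2 h3 hn hx' hz2).2)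
  rw [hcount, hmain, Set.ncard_eq_toFinset_card C hCfin]
  ring
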